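/- For any closed set S in a Hilbert space, any x ∉ S with nonempty projection set Proj_S(x), and any z ∈ Proj_S(x), one has x - z ∈ d_S(x) ∂_P d_S(z), where ∂_P d_S is the proximal subdifferential of the distance function. -/
import Mathlib


open Metric
open scoped InnerProductSpace

/-- The proximal subdifferential of `f` at `x`. -/
def proxSubdiff {H : Type*} [NormedAddCommGroup H] [InnerProductSpace ℝ H]
    (f : H → ℝ) (x : H) : Set H :=
  {ζ | ∃ σ ≥ (0:ℝ), ∃ η > (0:ℝ), ∀ y, ‖y - x‖ < η →
    f x + ⟪ζ, y - x⟫_ℝ - σ * ‖y - x‖ ^ 2 ≤ f y}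

theorem stmt4 {H : Type*} [NormedAddCommGroup H] [InnerProductSpace ℝ H] [CompleteSpace H]
    (S : Set H) (hS : S.Nonempty) (hSc : IsClosed S) (x : H) (hx : x ∉ S)
    (z : H) (hzS : z ∈ S) (hz : ‖x - z‖ = infDist x S) :
    ∃ w ∈ proxSubdiff (fun y => infDist y S) z, x - z = (infDist x S) • w := by
  set d : ℝ := infDist x S with hd
  have hdpos : 0 < d := by
    rw [hd, ← hSc.notMem_iff_infDist_pos hS] at *
    exact hx
  refine ⟨d⁻¹ • (x - z), ?_, by
    rw [smul_smul, mul_inv_cancel₀ hdpos.ne', one_smul]⟩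
  refine ⟨1 / (2 * d), by positivity, 1, one_pos, fun y hy => ?_⟩
  have h0 : infDist z S = 0 := infDist_zero_of_mem hzS
  have htri : d ≤ infDist y S + ‖x - y‖ := by
    have := infDist_le_infDist_add_dist (x := x) (y := y) (s := S)
    rwa [dist_eq_norm] at this
  have hexp : ‖x - y‖ ^ 2 = ‖x - z‖ ^ 2 - 2 * ⟪x - z, y - z⟫_ℝ + ‖y - z‖ ^ 2 := by
    have : x - y = (x - z) - (y - z) := by abel
    rw [this, norm_sub_sq_real]
  have hinner : ⟪d⁻¹ • (x - z), y - z⟫_ℝ = d⁻¹ * ⟪x - z, y - z⟫_ℝ :=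
    real_inner_smul_left _ _ _
  simp only [h0, hinner]
  have hdz : ‖x - z‖ = d := hz
  have hsq : (d - ‖x - y‖) ^ 2 ≥ 0 := sq_nonneg _
  have hdi : d⁻¹ = 1 / d := (one_div d).symm
  rw [hdi]
  have hd2 : d ≠ 0 := hdpos.ne'
  rw [div_mul_eq_mul_div]
  rw [show (0 + 1 * ⟪x - z, y - z⟫_ℝ / d - 1 / (2 * d) * ‖y - z‖ ^ 2)
      = (⟪x - z, y - z⟫_ℝ * 2 - ‖y - z‖ ^ 2) / (2 * d) from by field_simp; ring,
    div_le_iff₀ (by positivity)]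
  nlinarith [hsq, hexp, htri, hdz, sq_nonneg (‖y - z‖), mul_pos hdpos hdpos]
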